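/- The ideal I equals the ideal of ℝ[z₁,…,z_d] generated by the polynomials q_Θ, where Θ ranges over all d×d integer matrices each of whose columns is a 0-1 vector with exactly one or exactly two entries equal to 1 and which satisfy det Θ = ±1. -/

import Mathlib

open MvPolynomial

/-- For a `d×d` integer matrix `Θ` with 0-1 columns, the polynomial
`q_Θ(z) = ∏_{columns θ of Θ} (1 + z^θ)/2`, where `z^θ = z₁^{θ₁}⋯z_d^{θ_d}`. -/
noncomputable def qpoly {d : ℕ} (Θ : Matrix (Fin d) (Fin d) ℤ) : MvPolynomial (Fin d) ℝ :=
  ∏ c : Fin d, (C (1 / 2 : ℝ) * (1 + ∏ i : Fin d, X i ^ (Θ i c).toNat))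

namespace Stmt3Aux

variable {d : ℕ}

/-- The generating set. -/
def gset (d : ℕ) : Set (MvPolynomial (Fin d) ℝ) :=
  {q : MvPolynomial (Fin d) ℝ | ∃ Θ : Matrix (Fin d) (Fin d) ℤ,
        (∀ i c, Θ i c = 0 ∨ Θ i c = 1) ∧
        (∀ c, (∑ i, Θ i c) = 1 ∨ (∑ i, Θ i c) = 2) ∧
        (Θ.det = 1 ∨ Θ.det = -1) ∧
        q = qpoly Θ}

lemma vec_eq_zero {x : Fin d → ZMod 2} (M : Matrix (Fin d) (Fin d) (ZMod 2))
    (hM : IsUnit M.det) (h : M.mulVec x = 0) : x = 0 := by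
  have h2 := congrArg (M⁻¹.mulVec) h
  rwa [Matrix.mulVec_mulVec, Matrix.nonsing_inv_mul _ hM, Matrix.one_mulVec,
    Matrix.mulVec_zero] at h2

lemma sign_prod (ε : Fin d → ℝ) (hε : ∀ i, ε i = -1 ∨ ε i = 1) (t : Fin d → ℕ) :
    ∏ i, ε i ^ t i = (-1 : ℝ) ^ (∑ i, (if ε i = 1 then 0 else 1) * t i) := by
  rw [← Finset.prod_pow_eq_pow_sum]
  refine Finset.prod_congr rfl fun i _ => ?_
  rcases hε i with h | h
  · rw [h]; rw [if_neg (by norm_num [h])]; rw [one_mul]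
  · rw [h]; rw [if_pos rfl]; simp

lemma gen_vanish (Θ : Matrix (Fin d) (Fin d) ℤ)
    (h01 : ∀ i c, Θ i c = 0 ∨ Θ i c = 1) (hdet : Θ.det = 1 ∨ Θ.det = -1)
    (ε : Fin d → ℝ) (hε : ∀ i, ε i = -1 ∨ ε i = 1) (hne : ε ≠ fun _ => 1) :
    eval ε (qpoly Θ) = 0 := by
  have hex : ∃ c, ∏ i, ε i ^ (Θ i c).toNat = -1 := by
    by_contra hall
    push_neg at hall
    -- then all column products are 1, leading to ε = 1
    set b : Fin d → ℕ := fun i => if ε i = 1 then 0 else 1 with hb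
    have hcol : ∀ c, Even (∑ i, b i * (Θ i c).toNat) := by
      intro c
      have h1 := sign_prod ε hε (fun i => (Θ i c).toNat)
      rcases Nat.even_or_odd (∑ i, b i * (Θ i c).toNat) with he | ho
      · exact he
      · exact absurd (h1.trans (ho.neg_one_pow)) (hall c)
    -- build the mod-2 linear algebra contradiction
    set M : Matrix (Fin d) (Fin d) (ZMod 2) := fun c i => ((Θ i c : ℤ) : ZMod 2) with hM
    have hMdet : IsUnit M.det := by
      have heq : M = ((Int.castRingHom (ZMod 2)).mapMatrix Θ.transpose) := by
        ext c i
        simp [hM, RingHom.mapMatrix_apply, Matrix.map_apply, Matrix.transpose_apply]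
      rw [heq, ← RingHom.map_det, Matrix.det_transpose]
      rcases hdet with h | h <;> rw [h] <;> exact IsUnit.of_mul_eq_one 1 (by decide)
    set x : Fin d → ZMod 2 := fun i => (b i : ZMod 2) with hx
    have hMx : M.mulVec x = 0 := by
      funext c
      have h2 : ((∑ i, b i * (Θ i c).toNat : ℕ) : ZMod 2) = 0 := by
        rcases hcol c with ⟨k, hk⟩
        rw [hk]; push_cast
        rw [← two_mul]
        have h20 : (2 : ZMod 2) = 0 := by decide
        rw [h20, zero_mul]
      rw [Nat.cast_sum] at h2
      show (∑ i, M c i * x i) = 0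
      rw [← h2]
      refine Finset.sum_congr rfl fun i _ => ?_
      rcases h01 i c with h | h <;>
        simp [hM, hx, h, mul_comm]
    have hx0 := vec_eq_zero M hMdet hMx
    apply hne
    funext i
    have hxi : x i = 0 := congrFun hx0 i
    rcases hε i with h | h
    · exfalso
      have hbi : b i = 1 := by
        show (if ε i = 1 then 0 else 1) = 1
        rw [if_neg (by rw [h]; norm_num)]
      have : x i = ((1 : ℕ) : ZMod 2) := by
        show ((b i : ℕ) : ZMod 2) = _
        rw [hbi]
      rw [this] at hxi
      rw [Nat.cast_one] at hxi
      exact one_ne_zero hxi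
    · exact h
  obtain ⟨c, hc⟩ := hex
  rw [qpoly, map_prod]
  refine Finset.prod_eq_zero (Finset.mem_univ c) ?_
  rw [map_mul, map_add, map_one, map_prod]
  simp only [map_pow, eval_X, eval_C]
  rw [hc]
  norm_num


/-! ### Lagrange interpolation modulo the ideal generated by `X k ^ 2 - 1` -/

def nu (b : Bool) : ℝ := if b then 1 else -1

noncomputable def Esig (σ : Fin d → Bool) : MvPolynomial (Fin d) ℝ :=
  ∏ i : Fin d, (C (1/2 : ℝ) * (1 + C (nu (σ i)) * X i))

noncomputable def Ksq (d : ℕ) : Ideal (MvPolynomial (Fin d) ℝ) :=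
  Ideal.span (Set.range fun k : Fin d => X k ^ 2 - 1)

lemma prod_sub_prod_mem {R : Type*} [CommRing R] (K : Ideal R) (s : Finset (Fin d))
    (f g : Fin d → R) (h : ∀ i ∈ s, f i - g i ∈ K) :
    (∏ i ∈ s, f i) - (∏ i ∈ s, g i) ∈ K := by
  classical
  induction s using Finset.induction_on with
  | empty => simp
  | insert a s hnotmem ih =>
    rw [Finset.prod_insert hnotmem, Finset.prod_insert hnotmem]
    have key : f a * ∏ i ∈ s, f i - g a * ∏ i ∈ s, g i
        = f a * ((∏ i ∈ s, f i) - ∏ i ∈ s, g i) + (f a - g a) * ∏ i ∈ s, g i := by ring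
    rw [key]
    exact K.add_mem (K.mul_mem_left _ (ih fun i hi => h i (Finset.mem_insert_of_mem hi)))
      (K.mul_mem_right _ (h a (Finset.mem_insert_self a s)))

lemma pow_sub_parity_mem (i : Fin d) (n : ℕ) :
    (X i : MvPolynomial (Fin d) ℝ) ^ n - X i ^ (n % 2) ∈ Ksq d := by
  have hgen : (X i : MvPolynomial (Fin d) ℝ) ^ 2 - 1 ∈ Ksq d :=
    Ideal.subset_span ⟨i, rfl⟩
  have hdvd : ((X i : MvPolynomial (Fin d) ℝ) ^ 2 - 1) ∣ (X i ^ n - X i ^ (n % 2)) := by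
    conv_lhs => rw [show ((X i : MvPolynomial (Fin d) ℝ) ^ 2 - 1)
      = (X i ^ 2 - 1) by rfl]
    have : (X i : MvPolynomial (Fin d) ℝ) ^ n
        = ((X i ^ 2) ^ (n / 2)) * X i ^ (n % 2) := by
      rw [← pow_mul, ← pow_add, Nat.div_add_mod]
    rw [this]
    have h2 : ((X i : MvPolynomial (Fin d) ℝ) ^ 2 - 1)
        ∣ ((X i ^ 2) ^ (n / 2) - 1) := by
      have := sub_dvd_pow_sub_pow ((X i : MvPolynomial (Fin d) ℝ) ^ 2) 1 (n / 2)
      simpa using this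
    obtain ⟨w, hw⟩ := h2
    exact ⟨w * X i ^ (n % 2), by linear_combination (X i : MvPolynomial (Fin d) ℝ) ^ (n % 2) * hw⟩
  obtain ⟨w, hw⟩ := hdvd
  rw [hw]
  exact (Ksq d).mul_mem_right _ hgen

lemma two_C_half : (C (1/2 : ℝ) : MvPolynomial (Fin d) ℝ) * 2 = 1 := by
  have h2 : (2 : MvPolynomial (Fin d) ℝ) = C 2 := (map_ofNat C 2).symm
  rw [h2, ← map_mul]
  norm_num

lemma bool_sum_factor (u : Fin d →₀ ℕ) (i : Fin d) :
    ∑ b : Bool, (C (nu b ^ u i) * (C (1/2 : ℝ) * (1 + C (nu b) * X i)))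
      = (X i : MvPolynomial (Fin d) ℝ) ^ (u i % 2) := by
  rw [Fintype.sum_bool]
  rw [show nu true = 1 from by simp [nu], show nu false = -1 from by simp [nu]]
  rw [map_neg, map_one]
  rcases Nat.even_or_odd (u i) with he | ho
  · rw [Nat.even_iff.1 he, pow_zero, one_pow, he.neg_one_pow, map_one]
    linear_combination (two_C_half (d := d))
  · rw [Nat.odd_iff.1 ho, pow_one, one_pow, ho.neg_one_pow, map_one, map_neg, map_one]
    linear_combination (X i : MvPolynomial (Fin d) ℝ) * (two_C_half (d := d))


lemma interp (p : MvPolynomial (Fin d) ℝ) :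
    p - ∑ σ : Fin d → Bool, C (eval (fun i => nu (σ i)) p) * Esig σ ∈ Ksq d := by
  induction p using MvPolynomial.induction_on' with
  | add p q hp hq =>
    have hsum : ∑ σ : Fin d → Bool, C (eval (fun i => nu (σ i)) (p + q)) * Esig σ
        = (∑ σ : Fin d → Bool, C (eval (fun i => nu (σ i)) p) * Esig σ)
          + ∑ σ : Fin d → Bool, C (eval (fun i => nu (σ i)) q) * Esig σ := by
      rw [← Finset.sum_add_distrib]
      refine Finset.sum_congr rfl fun σ _ => ?_
      rw [map_add, map_add, add_mul]
    rw [hsum]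
    have hmem := (Ksq d).add_mem hp hq
    convert hmem using 1
    ring
  | monomial u c =>
    have hsum : ∑ σ : Fin d → Bool, C (eval (fun i => nu (σ i)) (monomial u c)) * Esig σ
        = C c * ∏ i : Fin d, (X i : MvPolynomial (Fin d) ℝ) ^ (u i % 2) := by
      have hterm : ∀ σ : Fin d → Bool,
          C (eval (fun i => nu (σ i)) (monomial u c)) * Esig σ
          = C c * ∏ i : Fin d,
              (C (nu (σ i) ^ u i) * (C (1/2 : ℝ) * (1 + C (nu (σ i)) * X i))) := by
        intro σ
        rw [eval_monomial]
        rw [Finsupp.prod_fintype _ _ (fun i => pow_zero _)]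
        rw [map_mul, map_prod, Esig, mul_assoc, ← Finset.prod_mul_distrib]
      rw [Finset.sum_congr rfl fun σ _ => hterm σ, ← Finset.mul_sum]
      congr 1
      rw [← Fintype.piFinset_univ,
        Finset.sum_prod_piFinset (ι := Fin d) (Finset.univ : Finset Bool)
          (fun i b => C (nu b ^ u i) * (C (1/2 : ℝ) * (1 + C (nu b) * X i)))]
      exact Finset.prod_congr rfl fun i _ => bool_sum_factor u i
    rw [hsum]
    have hmon : (monomial u c : MvPolynomial (Fin d) ℝ)
        = C c * ∏ i : Fin d, (X i : MvPolynomial (Fin d) ℝ) ^ u i := by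
      rw [monomial_eq]
      congr 1
      exact Finsupp.prod_fintype _ _ (fun i => pow_zero _)
    rw [hmon, ← mul_sub]
    exact (Ksq d).mul_mem_left _
      (prod_sub_prod_mem (Ksq d) Finset.univ _ _ fun i _ => pow_sub_parity_mem i (u i))


/-! ### The hard membership: `X 0 ^ 2 - 1` lies in the span of the generators -/

noncomputable def Jd (d : ℕ) : Ideal (MvPolynomial (Fin d) ℝ) := Ideal.span (gset d)

lemma prod_X_single {m : ℕ} (a : Fin m) (e : Fin m → ℕ) (he : e a = 1)
    (h0 : ∀ i, i ≠ a → e i = 0) :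
    (∏ i : Fin m, (X i : MvPolynomial (Fin m) ℝ) ^ e i) = X a := by
  rw [Finset.prod_eq_single a (fun i _ hi => by rw [h0 i hi, pow_zero])
    (fun h => absurd (Finset.mem_univ a) h), he, pow_one]

lemma prod_X_pair {m : ℕ} {a b : Fin m} (hab : a ≠ b) (e : Fin m → ℕ) (ha : e a = 1)
    (hb : e b = 1) (h0 : ∀ i, i ≠ a → i ≠ b → e i = 0) :
    (∏ i : Fin m, (X i : MvPolynomial (Fin m) ℝ) ^ e i) = X a * X b := by
  rw [← Finset.mul_prod_erase _ _ (Finset.mem_univ a), ha, pow_one]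
  congr 1
  rw [Finset.prod_eq_single_of_mem b (Finset.mem_erase.2 ⟨hab.symm, Finset.mem_univ b⟩)
    (fun i _ hib => by rw [h0 i (Finset.ne_of_mem_erase (by assumption)) hib, pow_zero]),
    hb, pow_one]

variable {n : ℕ}

/-- The structured matrix: identity, plus (if `σ`) an extra `1` at `(0, c)`,
plus extra `1`s at `(c, s)` for `s ∈ T`. -/
def bmat (c : Fin (n+1)) (T : Finset (Fin (n+1))) (σ : Bool) :
    Matrix (Fin (n+1)) (Fin (n+1)) ℤ :=
  fun i s => if i = s then 1 else if i = 0 ∧ s = c ∧ σ = true then 1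
    else if i = c ∧ s ∈ T then 1 else 0

lemma bmat_01 (c : Fin (n+1)) (T : Finset (Fin (n+1))) (σ : Bool) (i s : Fin (n+1)) :
    bmat c T σ i s = 0 ∨ bmat c T σ i s = 1 := by
  unfold bmat; split_ifs <;> simp

lemma bmat_det (c : Fin (n+1)) (hc : c ≠ 0) (T : Finset (Fin (n+1)))
    (hT : ∀ s ∈ T, c < s) (σ : Bool) : (bmat c T σ).det = 1 := by
  have htri : (bmat c T σ).BlockTriangular id := by
    intro i j hij
    simp only [id] at hij
    unfold bmat
    rw [if_neg (by exact fun h => absurd h (ne_of_gt hij)), if_neg, if_neg]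
    · rintro ⟨hic, hjT⟩
      exact absurd (hT j hjT) (by rw [← hic]; exact not_lt_of_gt hij)
    · rintro ⟨hi0, hjc, -⟩
      rw [hi0] at hij
      exact absurd hij (by simp)
  rw [Matrix.det_of_upperTriangular htri]
  refine Finset.prod_eq_one fun i _ => ?_
  unfold bmat
  rw [if_pos rfl]

lemma sum_ite_eq_one {P : Fin (n+1) → Prop} [DecidablePred P] (a : Fin (n+1))
    (ha : P a) (h : ∀ i, P i → i = a) :
    (∑ i, if P i then (1:ℤ) else 0) = 1 := by
  have : ∀ i : Fin (n+1), (if P i then (1:ℤ) else 0) = if i = a then 1 else 0 := by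
    intro i
    by_cases hi : P i
    · rw [if_pos hi, if_pos (h i hi)]
    · rw [if_neg hi, if_neg (fun he => hi (by rwa [he]))]
  rw [Finset.sum_congr rfl fun i _ => this i]
  rw [Finset.sum_ite_eq' Finset.univ a (fun _ : Fin (n+1) => (1:ℤ))]
  exact if_pos (Finset.mem_univ a)

lemma bmat_colsum (c : Fin (n+1)) (hc : c ≠ 0) (T : Finset (Fin (n+1)))
    (hT : ∀ s ∈ T, c < s) (σ : Bool) (s : Fin (n+1)) :
    (∑ i, bmat c T σ i s) = 1 ∨ (∑ i, bmat c T σ i s) = 2 := by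
  have hcT : c ∉ T := fun h => absurd (hT c h) (lt_irrefl c)
  have hsplit : ∀ i, bmat c T σ i s
      = (if i = s then (1:ℤ) else 0) + (if i = 0 ∧ s = c ∧ σ = true then 1 else 0)
        + (if i = c ∧ s ∈ T then 1 else 0) := by
    intro i
    unfold bmat
    by_cases h1 : i = s
    · subst h1
      have h2 : ¬(i = 0 ∧ i = c ∧ σ = true) := fun ⟨a, b, _⟩ => hc (by rw [← b]; exact a)
      have h3 : ¬(i = c ∧ i ∈ T) := fun ⟨a, b⟩ => hcT (a ▸ b)
      rw [if_pos rfl, if_pos rfl, if_neg h2, if_neg h3]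
      norm_num
    · rw [if_neg h1, if_neg h1]
      by_cases h2 : i = 0 ∧ s = c ∧ σ = true
      · have h3 : ¬(i = c ∧ s ∈ T) := fun ⟨a, _⟩ => hc (by rw [← a]; exact h2.1)
        rw [if_pos h2, if_pos h2, if_neg h3]
        norm_num
      · rw [if_neg h2, if_neg h2]
        norm_num
  rw [Finset.sum_congr rfl fun i _ => hsplit i, Finset.sum_add_distrib,
    Finset.sum_add_distrib]
  have hfirst : (∑ i, if i = s then (1:ℤ) else 0) = 1 :=
    sum_ite_eq_one s rfl (fun i hi => hi)
  rw [hfirst]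
  by_cases h2 : s = c ∧ σ = true
  · have hmid : (∑ i : Fin (n+1), if i = 0 ∧ s = c ∧ σ = true then (1:ℤ) else 0) = 1 :=
      sum_ite_eq_one 0 ⟨rfl, h2⟩ (fun i hi => hi.1)
    have hlast : (∑ i, if i = c ∧ s ∈ T then (1:ℤ) else 0) = 0 := by
      refine Finset.sum_eq_zero fun i _ => if_neg ?_
      rintro ⟨-, hsT⟩
      exact hcT (h2.1 ▸ hsT)
    rw [hmid, hlast]
    right; norm_num
  · have hmid : (∑ i : Fin (n+1), if i = 0 ∧ s = c ∧ σ = true then (1:ℤ) else 0) = 0 := by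
      refine Finset.sum_eq_zero fun i _ => if_neg ?_
      rintro ⟨-, hrest⟩
      exact h2 hrest
    rw [hmid, add_zero]
    by_cases h3 : s ∈ T
    · have hlast : (∑ i, if i = c ∧ s ∈ T then (1:ℤ) else 0) = 1 :=
        sum_ite_eq_one c ⟨rfl, h3⟩ (fun i hi => hi.1)
      rw [hlast]
      right; norm_num
    · have hlast : (∑ i, if i = c ∧ s ∈ T then (1:ℤ) else 0) = 0 := by
        refine Finset.sum_eq_zero fun i _ => if_neg ?_
        rintro ⟨-, hsT⟩
        exact h3 hsT
      rw [hlast, add_zero]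
      left; rfl


lemma qpoly_bmat (c : Fin (n+1)) (hc : c ≠ 0) (T : Finset (Fin (n+1)))
    (hT : ∀ s ∈ T, c < s) (σ : Bool) :
    qpoly (bmat c T σ) = C ((1/2 : ℝ)^(n+1)) *
      ((1 + X 0) * ((1 + (if σ = true then X 0 * X c else X c)) *
        ∏ s ∈ (Finset.univ.erase (0 : Fin (n+1))).erase c,
          (if s ∈ T then 1 + X s * X c else 1 + X s))) := by
  have h0T : (0 : Fin (n+1)) ∉ T := fun h => absurd (hT 0 h) (by
    intro hlt
    exact absurd hlt (by simp))
  have hcT : c ∉ T := fun h => absurd (hT c h) (lt_irrefl c)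
  unfold qpoly
  rw [Finset.prod_mul_distrib, Finset.prod_const, Finset.card_univ, Fintype.card_fin,
    ← map_pow]
  congr 1
  -- split off columns 0 and c
  have hc0 : c ∈ (Finset.univ : Finset (Fin (n+1))).erase 0 :=
    Finset.mem_erase.2 ⟨hc, Finset.mem_univ c⟩
  rw [← Finset.mul_prod_erase _ _ (Finset.mem_univ (0 : Fin (n+1))),
    ← Finset.mul_prod_erase _ _ hc0]
  congr 1
  · -- column 0
    congr 1
    refine prod_X_single 0 _ ?_ ?_
    · show (bmat c T σ 0 0).toNat = 1
      unfold bmat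
      rw [if_pos rfl]
      rfl
    · intro i hi
      show (bmat c T σ i 0).toNat = 0
      unfold bmat
      rw [if_neg hi, if_neg (fun h => hi h.1), if_neg (fun h => h0T h.2)]
      rfl
  congr 1
  · -- column c
    congr 1
    cases σ with
    | true =>
      rw [if_pos rfl]
      refine prod_X_pair (by exact fun h => hc h.symm) _ ?_ ?_ ?_
      · show (bmat c T true 0 c).toNat = 1
        unfold bmat
        rw [if_neg (fun h => hc h.symm), if_pos ⟨rfl, rfl, rfl⟩]
        rfl
      · show (bmat c T true c c).toNat = 1
        unfold bmat
        rw [if_pos rfl]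
        rfl
      · intro i hi0 hic
        show (bmat c T true i c).toNat = 0
        unfold bmat
        rw [if_neg hic, if_neg (fun h => hi0 h.1), if_neg (fun h => hcT h.2)]
        rfl
    | false =>
      rw [if_neg (by simp)]
      refine prod_X_single c _ ?_ ?_
      · show (bmat c T false c c).toNat = 1
        unfold bmat
        rw [if_pos rfl]
        rfl
      · intro i hic
        show (bmat c T false i c).toNat = 0
        unfold bmat
        rw [if_neg hic, if_neg (by rintro ⟨-, -, h⟩; exact Bool.false_ne_true h),
          if_neg (fun h => hcT h.2)]
        rfl
  · -- the remaining columns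
    refine Finset.prod_congr rfl fun s hs => ?_
    have hs0 : s ≠ 0 := Finset.ne_of_mem_erase (Finset.mem_of_mem_erase hs)
    have hsc : s ≠ c := Finset.ne_of_mem_erase hs
    by_cases hsT : s ∈ T
    · rw [if_pos hsT]
      congr 1
      refine prod_X_pair hsc _ ?_ ?_ ?_
      · show (bmat c T σ s s).toNat = 1
        unfold bmat
        rw [if_pos rfl]
        rfl
      · show (bmat c T σ c s).toNat = 1
        unfold bmat
        rw [if_neg (fun h => hsc h.symm), if_neg (fun h => hc h.1), if_pos ⟨rfl, hsT⟩]
        rfl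
      · intro i his hi_c
        show (bmat c T σ i s).toNat = 0
        unfold bmat
        rw [if_neg his, if_neg (fun h => hs0 (by rw [h.2.1] at hsc; exact absurd rfl hsc)),
          if_neg (fun h => hi_c h.1)]
        rfl
    · rw [if_neg hsT]
      congr 1
      refine prod_X_single s _ ?_ ?_
      · show (bmat c T σ s s).toNat = 1
        unfold bmat
        rw [if_pos rfl]
        rfl
      · intro i his
        show (bmat c T σ i s).toNat = 0
        unfold bmat
        rw [if_neg his, if_neg (fun h => hsc h.2.1), if_neg (fun h => hsT h.2)]
        rfl


lemma bmat_mem (c : Fin (n+1)) (hc : c ≠ 0) (T : Finset (Fin (n+1)))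
    (hT : ∀ s ∈ T, c < s) (σ : Bool) : qpoly (bmat c T σ) ∈ Jd (n+1) :=
  Ideal.subset_span ⟨bmat c T σ, bmat_01 c T σ, bmat_colsum c hc T hT σ,
    Or.inl (bmat_det c hc T hT σ), rfl⟩

lemma L1_mem (c : Fin (n+1)) (hc : c ≠ 0) (T : Finset (Fin (n+1)))
    (hT : ∀ s ∈ T, c < s) :
    (1 - X 0 ^ 2) * ∏ s ∈ (Finset.univ.erase (0 : Fin (n+1))).erase c,
        (if s ∈ T then 1 + X s * X c else 1 + X s) ∈ Jd (n+1) := by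
  set P : MvPolynomial (Fin (n+1)) ℝ :=
    ∏ s ∈ (Finset.univ.erase (0 : Fin (n+1))).erase c,
      (if s ∈ T then 1 + X s * X c else 1 + X s) with hP
  have hCC : (C ((2:ℝ)^(n+1)) * C ((1/2:ℝ)^(n+1)) : MvPolynomial (Fin (n+1)) ℝ) = 1 := by
    rw [← map_mul, ← mul_pow]
    norm_num
  have key : (1 - X 0 ^ 2) * P
      = C ((2:ℝ)^(n+1)) * (qpoly (bmat c T true) - X 0 * qpoly (bmat c T false)) := by
    rw [qpoly_bmat c hc T hT true, qpoly_bmat c hc T hT false, if_pos rfl,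
      if_neg (by simp)]
    linear_combination (-((1 : MvPolynomial (Fin (n+1)) ℝ) - X 0 ^ 2) * P) * hCC
  rw [key]
  exact Ideal.mul_mem_left _ _ ((Jd (n+1)).sub_mem (bmat_mem c hc T hT true)
    (Ideal.mul_mem_left _ _ (bmat_mem c hc T hT false)))


lemma peel_mem (c : Fin (n+1)) (hc : c ≠ 0) :
    ∀ (k : ℕ) (V D : Finset (Fin (n+1))), D ⊆ V → (0 : Fin (n+1)) ∉ V → c ∉ V →
    (∀ s ∈ D, c < s) → (∀ s : Fin (n+1), s ≠ 0 → s < c → s ∈ V) →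
    V.card + k = n - 1 →
    (1 - X 0 ^ 2) * (1 - X c) ^ k *
      ∏ s ∈ V, (if s ∈ D then 1 + X s * X c else 1 + X s) ∈ Jd (n+1) := by
  intro k
  induction k with
  | zero =>
    intro V D hDV h0V hcV hD hLo hcard
    have hsub : V ⊆ (Finset.univ.erase (0:Fin (n+1))).erase c := fun s hs =>
      Finset.mem_erase.2 ⟨fun h => hcV (h ▸ hs),
        Finset.mem_erase.2 ⟨fun h => h0V (h ▸ hs), Finset.mem_univ s⟩⟩
    have hcard2 : ((Finset.univ.erase (0:Fin (n+1))).erase c).card = n - 1 := by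
      rw [Finset.card_erase_of_mem (Finset.mem_erase.2 ⟨hc, Finset.mem_univ c⟩),
        Finset.card_erase_of_mem (Finset.mem_univ _), Finset.card_univ, Fintype.card_fin]
      omega
    have hVeq : V = (Finset.univ.erase (0:Fin (n+1))).erase c :=
      Finset.eq_of_subset_of_card_le hsub (by rw [hcard2]; omega)
    rw [pow_zero, mul_one, hVeq]
    exact L1_mem c hc D hD
  | succ k ih =>
    intro V D hDV h0V hcV hD hLo hcard
    have hsub : V ⊆ (Finset.univ.erase (0:Fin (n+1))).erase c := fun s hs =>
      Finset.mem_erase.2 ⟨fun h => hcV (h ▸ hs),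
        Finset.mem_erase.2 ⟨fun h => h0V (h ▸ hs), Finset.mem_univ s⟩⟩
    have hcard2 : ((Finset.univ.erase (0:Fin (n+1))).erase c).card = n - 1 := by
      rw [Finset.card_erase_of_mem (Finset.mem_erase.2 ⟨hc, Finset.mem_univ c⟩),
        Finset.card_erase_of_mem (Finset.mem_univ _), Finset.card_univ, Fintype.card_fin]
      omega
    have hne : (((Finset.univ.erase (0:Fin (n+1))).erase c) \ V).Nonempty := by
      rw [← Finset.card_pos, Finset.card_sdiff_of_subset hsub, hcard2]
      omega
    obtain ⟨z, hz⟩ := hne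
    have hzV : z ∉ V := (Finset.mem_sdiff.1 hz).2
    have hz0 : z ≠ 0 :=
      Finset.ne_of_mem_erase (Finset.mem_of_mem_erase (Finset.mem_sdiff.1 hz).1)
    have hzc : z ≠ c := Finset.ne_of_mem_erase (Finset.mem_sdiff.1 hz).1
    have hcz : c < z := by
      rcases lt_trichotomy c z with h | h | h
      · exact h
      · exact absurd h.symm hzc
      · exact absurd (hLo z hz0 h) hzV
    have hzD : z ∉ D := fun h => hzV (hDV h)
    have h0V' : (0 : Fin (n+1)) ∉ insert z V := fun h =>
      (Finset.mem_insert.1 h).elim (fun h => hz0 h.symm) h0V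
    have hcV' : c ∉ insert z V := fun h =>
      (Finset.mem_insert.1 h).elim (fun h => hzc h.symm) hcV
    have hLo' : ∀ s : Fin (n+1), s ≠ 0 → s < c → s ∈ insert z V :=
      fun s h1 h2 => Finset.mem_insert_of_mem (hLo s h1 h2)
    have hcard' : (insert z V).card + k = n - 1 := by
      rw [Finset.card_insert_of_notMem hzV]
      omega
    have h1 := ih (insert z V) D (hDV.trans (Finset.subset_insert z V)) h0V' hcV' hD
      hLo' hcard'
    have h2 := ih (insert z V) (insert z D) (Finset.insert_subset_insert z hDV) h0V' hcV'
      (fun s hs => (Finset.mem_insert.1 hs).elim (fun h => h ▸ hcz) (hD s)) hLo' hcard'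
    have hprod1 : ∏ s ∈ insert z V, (if s ∈ D then 1 + X s * X c else 1 + X s)
        = (1 + X z) * ∏ s ∈ V,
            ((if s ∈ D then 1 + X s * X c else 1 + X s) : MvPolynomial (Fin (n+1)) ℝ) := by
      rw [Finset.prod_insert hzV, if_neg hzD]
    have hprod2 : ∏ s ∈ insert z V, (if s ∈ insert z D then 1 + X s * X c else 1 + X s)
        = (1 + X z * X c) * ∏ s ∈ V,
            ((if s ∈ D then 1 + X s * X c else 1 + X s) : MvPolynomial (Fin (n+1)) ℝ) := by
      rw [Finset.prod_insert hzV, if_pos (Finset.mem_insert_self z D)]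
      congr 1
      refine Finset.prod_congr rfl fun s hs => ?_
      by_cases hsD : s ∈ D
      · rw [if_pos (Finset.mem_insert_of_mem hsD), if_pos hsD]
      · rw [if_neg (fun h => hsD ((Finset.mem_insert.1 h).resolve_left
          (fun he => hzV (by rw [← he]; exact hs)))), if_neg hsD]
    rw [hprod1] at h1
    rw [hprod2] at h2
    set Q : MvPolynomial (Fin (n+1)) ℝ :=
      ∏ s ∈ V, (if s ∈ D then 1 + X s * X c else 1 + X s) with hQ
    have key : (1 - X 0 ^ 2) * (1 - X c) ^ (k+1) * Q
        = (1 - X c) * ((1 - X 0 ^ 2) * (1 - X c) ^ k * ((1 + X z) * Q))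
          - ((1 - X 0 ^ 2) * (1 - X c) ^ k * ((1 + X z) * Q))
          + ((1 - X 0 ^ 2) * (1 - X c) ^ k * ((1 + X z * X c) * Q)) := by
      ring
    rw [key]
    exact (Jd (n+1)).add_mem ((Jd (n+1)).sub_mem (Ideal.mul_mem_left _ _ h1) h1) h2


lemma Hc_mem (c : Fin (n+1)) (hc : c ≠ 0) :
    (1 - X 0 ^ 2) * (1 - X c) ^ (n - c.val) *
      ∏ s ∈ (Finset.Iio c).erase 0, (1 + X s) ∈ Jd (n+1) := by
  have h0lt : (0 : Fin (n+1)) < c := Fin.pos_of_ne_zero hc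
  have hcard : ((Finset.Iio c).erase 0).card + (n - c.val) = n - 1 := by
    rw [Finset.card_erase_of_mem (Finset.mem_Iio.2 h0lt), Fin.card_Iio]
    have h1 : c.val ≠ 0 := fun h => hc (Fin.ext h)
    have h2 : c.val < n + 1 := c.isLt
    omega
  have hmem := peel_mem c hc (n - c.val) ((Finset.Iio c).erase 0) ∅
    (Finset.empty_subset _)
    (fun h => absurd h (Finset.notMem_erase 0 _))
    (fun h => absurd (Finset.mem_Iio.1 (Finset.mem_of_mem_erase h)) (lt_irrefl c))
    (fun s hs => absurd hs (Finset.notMem_empty s))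
    (fun s h1 h2 => Finset.mem_erase.2 ⟨h1, Finset.mem_Iio.2 h2⟩)
    hcard
  have hp : ∏ s ∈ (Finset.Iio c).erase 0,
      ((if s ∈ (∅ : Finset (Fin (n+1))) then 1 + X s * X c else 1 + X s)
        : MvPolynomial (Fin (n+1)) ℝ)
      = ∏ s ∈ (Finset.Iio c).erase 0, (1 + X s) :=
    Finset.prod_congr rfl fun s _ => if_neg (Finset.notMem_empty s)
  rwa [hp] at hmem

lemma one_mem_gset {m : ℕ} : qpoly (1 : Matrix (Fin m) (Fin m) ℤ) ∈ gset m := by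
  refine ⟨1, fun i c => ?_, fun c => Or.inl ?_, Or.inl Matrix.det_one, rfl⟩
  · rw [Matrix.one_apply]
    split_ifs <;> simp
  · have : ∀ i : Fin m, (1 : Matrix (Fin m) (Fin m) ℤ) i c = if i = c then 1 else 0 :=
      fun i => Matrix.one_apply
    rw [Finset.sum_congr rfl fun i _ => this i,
      Finset.sum_ite_eq' Finset.univ c (fun _ : Fin m => (1:ℤ))]
    exact if_pos (Finset.mem_univ c)

lemma qpoly_one {m : ℕ} :
    qpoly (1 : Matrix (Fin m) (Fin m) ℤ)
      = C ((1/2 : ℝ)^m) * ∏ s : Fin m, (1 + X s) := by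
  unfold qpoly
  rw [Finset.prod_mul_distrib, Finset.prod_const, Finset.card_univ, Fintype.card_fin,
    ← map_pow]
  congr 1
  refine Finset.prod_congr rfl fun s _ => ?_
  congr 1
  refine prod_X_single s _ ?_ ?_
  · show ((1 : Matrix (Fin m) (Fin m) ℤ) s s).toNat = 1
    rw [Matrix.one_apply_eq]
    rfl
  · intro i his
    show ((1 : Matrix (Fin m) (Fin m) ℤ) i s).toNat = 0
    rw [Matrix.one_apply_ne his]
    rfl

lemma Hd_mem : (1 - X 0 ^ 2) *
    ∏ s ∈ Finset.univ.erase (0 : Fin (n+1)), (1 + X s) ∈ Jd (n+1) := by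
  have hCC : (C ((2:ℝ)^(n+1)) * C ((1/2:ℝ)^(n+1)) : MvPolynomial (Fin (n+1)) ℝ) = 1 := by
    rw [← map_mul, ← mul_pow]
    norm_num
  have key : (1 - X 0 ^ 2) * ∏ s ∈ Finset.univ.erase (0 : Fin (n+1)), (1 + X s)
      = (1 - X 0) * (C ((2:ℝ)^(n+1)) * qpoly (1 : Matrix (Fin (n+1)) (Fin (n+1)) ℤ)) := by
    rw [qpoly_one]
    have hsplit : (∏ s : Fin (n+1), (1 + X s) : MvPolynomial (Fin (n+1)) ℝ)
        = (1 + X 0) * ∏ s ∈ Finset.univ.erase (0 : Fin (n+1)), (1 + X s) :=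
      (Finset.mul_prod_erase _ _ (Finset.mem_univ (0 : Fin (n+1)))).symm
    rw [hsplit]
    linear_combination (-((1 : MvPolynomial (Fin (n+1)) ℝ) - X 0) * (1 + X 0)
      * (∏ s ∈ Finset.univ.erase (0 : Fin (n+1)), (1 + X s))) * hCC
  rw [key]
  exact Ideal.mul_mem_left _ _ (Ideal.mul_mem_left _ _ (Ideal.subset_span one_mem_gset))

lemma bezout {m : ℕ} (t : MvPolynomial (Fin m) ℝ) (N : ℕ) :
    ∃ B : MvPolynomial (Fin m) ℝ, ((1 - t) * C (1/2 : ℝ))^N + (1 + t) * B = 1 := by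
  set a : MvPolynomial (Fin m) ℝ := (1 - t) * C (1/2 : ℝ) with ha
  set b : MvPolynomial (Fin m) ℝ := (1 + t) * C (1/2 : ℝ) with hb
  have hab : a + b = 1 := by
    rw [ha, hb, ← add_mul]
    linear_combination (two_C_half (d := m))
  refine ⟨∑ k ∈ Finset.range N, a^k * (C (1/2 : ℝ) * b^(N-1-k)) * ((N.choose k : ℕ) : MvPolynomial (Fin m) ℝ), ?_⟩
  have hpow := add_pow a b N
  rw [hab, one_pow] at hpow
  rw [Finset.sum_range_succ] at hpow
  simp only [Nat.sub_self, pow_zero, Nat.choose_self, Nat.cast_one, mul_one] at hpow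
  have hterm : ∀ k ∈ Finset.range N,
      a^k * b^(N-k) * ((N.choose k : ℕ) : MvPolynomial (Fin m) ℝ)
      = (1 + t) * (a^k * (C (1/2 : ℝ) * b^(N-1-k)) * ((N.choose k : ℕ) : MvPolynomial (Fin m) ℝ)) := by
    intro k hk
    have hk' : k < N := Finset.mem_range.1 hk
    have : N - k = (N - 1 - k) + 1 := by omega
    rw [this, pow_succ, hb]
    ring
  rw [Finset.sum_congr rfl hterm, ← Finset.mul_sum] at hpow
  linear_combination -hpow


lemma x0_sq_mem : ((X 0 : MvPolynomial (Fin (n+1)) ℝ)^2 - 1) ∈ Jd (n+1) := by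
  have hmain : ((1 : MvPolynomial (Fin (n+1)) ℝ) - X 0^2) ∈ Jd (n+1) := by
    choose B hB using fun c : Fin (n+1) => bezout (X c) (n - c.val)
    have hone : ∏ c ∈ Finset.univ.erase (0:Fin (n+1)),
        (((1 - X c) * C (1/2 : ℝ))^(n - c.val) + (1 + X c) * B c) = 1 := by
      rw [Finset.prod_congr rfl fun c _ => hB c, Finset.prod_const_one]
    rw [Finset.prod_add] at hone
    have hexp : ((1 : MvPolynomial (Fin (n+1)) ℝ) - X 0^2)
        = ∑ t ∈ (Finset.univ.erase (0:Fin (n+1))).powerset,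
            (1 - X 0^2) * ((∏ c ∈ t, ((1 - X c) * C (1/2 : ℝ))^(n - c.val)) *
              ∏ c ∈ (Finset.univ.erase (0:Fin (n+1))) \ t, ((1 + X c) * B c)) := by
      rw [← Finset.mul_sum, hone, mul_one]
    rw [hexp]
    refine Ideal.sum_mem _ fun t ht => ?_
    rcases Finset.eq_empty_or_nonempty t with hemp | hne
    · subst hemp
      rw [Finset.prod_empty, Finset.sdiff_empty, one_mul, Finset.prod_mul_distrib]
      have eq0 : ((1 : MvPolynomial (Fin (n+1)) ℝ) - X 0^2) *
          ((∏ c ∈ Finset.univ.erase (0:Fin (n+1)), (1 + X c)) *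
            ∏ c ∈ Finset.univ.erase (0:Fin (n+1)), B c)
          = ((1 - X 0^2) * ∏ c ∈ Finset.univ.erase (0:Fin (n+1)), (1 + X c)) *
            ∏ c ∈ Finset.univ.erase (0:Fin (n+1)), B c := by ring
      rw [eq0]
      exact Ideal.mul_mem_right _ _ Hd_mem
    · set cs := t.min' hne with hcs
      have hct : cs ∈ t := t.min'_mem hne
      have hcR : cs ∈ Finset.univ.erase (0:Fin (n+1)) := (Finset.mem_powerset.1 ht) hct
      have hc0 : cs ≠ 0 := Finset.ne_of_mem_erase hcR
      have hsplitA : (∏ c ∈ t, ((1 - X c) * C (1/2 : ℝ))^(n - c.val))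
          = ((1 - X cs) * C (1/2 : ℝ))^(n - cs.val) *
            ∏ c ∈ t.erase cs, ((1 - X c) * C (1/2 : ℝ))^(n - c.val) :=
        (Finset.mul_prod_erase _ _ hct).symm
      have hLoSub : (Finset.Iio cs).erase 0 ⊆ (Finset.univ.erase (0:Fin (n+1))) \ t := by
        intro s hs
        have hs0 : s ≠ 0 := Finset.ne_of_mem_erase hs
        have hsIo : s < cs := Finset.mem_Iio.1 (Finset.mem_of_mem_erase hs)
        refine Finset.mem_sdiff.2 ⟨Finset.mem_erase.2 ⟨hs0, Finset.mem_univ s⟩, ?_⟩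
        exact fun hst => absurd (t.min'_le s hst) (not_le.2 hsIo)
      have hsplitG : (∏ c ∈ (Finset.univ.erase (0:Fin (n+1))) \ t, ((1 + X c) * B c))
          = (∏ c ∈ ((Finset.univ.erase (0:Fin (n+1))) \ t) \ ((Finset.Iio cs).erase 0),
              ((1 + X c) * B c)) *
            ∏ c ∈ (Finset.Iio cs).erase 0, ((1 + X c) * B c) :=
        (Finset.prod_sdiff hLoSub).symm
      have hsplitLo : (∏ c ∈ (Finset.Iio cs).erase 0, ((1 + X c) * B c))
          = (∏ c ∈ (Finset.Iio cs).erase 0, (1 + X c)) *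
            ∏ c ∈ (Finset.Iio cs).erase 0, B c :=
        Finset.prod_mul_distrib
      have eq1 : ((1 : MvPolynomial (Fin (n+1)) ℝ) - X 0^2) *
          ((∏ c ∈ t, ((1 - X c) * C (1/2 : ℝ))^(n - c.val)) *
            ∏ c ∈ (Finset.univ.erase (0:Fin (n+1))) \ t, ((1 + X c) * B c))
          = ((1 - X 0^2) * (1 - X cs)^(n - cs.val) *
              ∏ s ∈ (Finset.Iio cs).erase 0, (1 + X s)) *
            ((C (1/2 : ℝ))^(n - cs.val) *
              (∏ c ∈ t.erase cs, ((1 - X c) * C (1/2 : ℝ))^(n - c.val)) *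
              ((∏ c ∈ ((Finset.univ.erase (0:Fin (n+1))) \ t) \ ((Finset.Iio cs).erase 0),
                ((1 + X c) * B c)) *
                ∏ c ∈ (Finset.Iio cs).erase 0, B c)) := by
        rw [hsplitA, hsplitG, hsplitLo, mul_pow]
        ring
      rw [eq1]
      exact Ideal.mul_mem_right _ _ (Hc_mem cs hc0)
  have heq : ((X 0 : MvPolynomial (Fin (n+1)) ℝ)^2 - 1) = -(1 - X 0^2) := by ring
  rw [heq]
  exact (Jd (n+1)).neg_mem hmain


lemma gset_rename {m : ℕ} (π : Equiv.Perm (Fin m)) {q : MvPolynomial (Fin m) ℝ}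
    (hq : q ∈ gset m) : rename π q ∈ gset m := by
  obtain ⟨Θ, h01, hcol, hdet, rfl⟩ := hq
  refine ⟨fun i c => Θ (π.symm i) c, fun i c => h01 _ _, fun c => ?_, ?_, ?_⟩
  · rw [Equiv.sum_comp π.symm (fun i => Θ i c)]
    exact hcol c
  · show (Θ.submatrix (⇑π.symm) id).det = 1 ∨ (Θ.submatrix (⇑π.symm) id).det = -1
    rw [Matrix.det_permute]
    rcases Int.units_eq_one_or (Equiv.Perm.sign π.symm) with h | h <;>
      rcases hdet with h2 | h2 <;> rw [h, h2] <;> simp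
  · unfold qpoly
    rw [map_prod]
    refine Finset.prod_congr rfl fun c _ => ?_
    rw [map_mul, rename_C, map_add, map_one, map_prod]
    congr 1
    congr 1
    have hstep : ∀ i : Fin m, rename π ((X i : MvPolynomial (Fin m) ℝ) ^ (Θ i c).toNat)
        = (X (π i)) ^ (Θ i c).toNat := fun i => by rw [map_pow, rename_X]
    rw [Finset.prod_congr rfl fun i _ => hstep i]
    rw [← Equiv.prod_comp π (fun j => (X j : MvPolynomial (Fin m) ℝ) ^ (Θ (π.symm j) c).toNat)]
    refine Finset.prod_congr rfl fun i _ => ?_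
    rw [Equiv.symm_apply_apply]

lemma xk_sq_mem (k : Fin (n+1)) :
    ((X k : MvPolynomial (Fin (n+1)) ℝ)^2 - 1) ∈ Jd (n+1) := by
  have h0 := x0_sq_mem (n := n)
  set π := Equiv.swap (0 : Fin (n+1)) k with hπ
  have himg : rename π ((X 0 : MvPolynomial (Fin (n+1)) ℝ)^2 - 1) = X k^2 - 1 := by
    rw [map_sub, map_pow, rename_X, map_one, hπ, Equiv.swap_apply_left]
  rw [← himg]
  have hmap := Ideal.mem_map_of_mem (rename π) h0
  rw [show Jd (n+1) = Ideal.span (gset (n+1)) from rfl, Ideal.map_span] at hmap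
  refine Ideal.span_mono ?_ hmap
  rintro q ⟨q0, hq0, rfl⟩
  exact gset_rename π hq0

lemma Ksq_le_Jd : Ksq (n+1) ≤ Jd (n+1) := by
  rw [Ksq, Ideal.span_le]
  rintro q ⟨k, rfl⟩
  exact xk_sq_mem k

lemma Esig_true {m : ℕ} :
    Esig (fun _ : Fin m => true) = qpoly (1 : Matrix (Fin m) (Fin m) ℤ) := by
  rw [qpoly_one, Esig]
  rw [Finset.prod_mul_distrib, Finset.prod_const, Finset.card_univ, Fintype.card_fin,
    ← map_pow]
  congr 1
  refine Finset.prod_congr rfl fun i _ => ?_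
  rw [show nu true = 1 from by simp [nu], map_one, one_mul]

end Stmt3Aux

/-- The ideal `I` of polynomials vanishing on `Z' = {ε ∈ {−1,1}^d : ε ≠ (1,…,1)}`
equals the ideal generated by the polynomials `q_Θ`, where `Θ` ranges over the `d×d`
integer matrices whose columns are 0-1 vectors with exactly one or two entries equal
to 1 and which satisfy `det Θ = ±1`. -/
theorem stmt_3 (d : ℕ) (hd : 1 ≤ d) (p : MvPolynomial (Fin d) ℝ) :
    (∀ ε : Fin d → ℝ, (∀ i, ε i = -1 ∨ ε i = 1) → ε ≠ (fun _ => 1) →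
      eval ε p = 0) ↔
    p ∈ Ideal.span
      {q : MvPolynomial (Fin d) ℝ | ∃ Θ : Matrix (Fin d) (Fin d) ℤ,
        (∀ i c, Θ i c = 0 ∨ Θ i c = 1) ∧
        (∀ c, (∑ i, Θ i c) = 1 ∨ (∑ i, Θ i c) = 2) ∧
        (Θ.det = 1 ∨ Θ.det = -1) ∧
        q = qpoly Θ} := by
  obtain ⟨n, rfl⟩ : ∃ n, d = n + 1 := ⟨d - 1, by omega⟩
  constructor
  · intro h
    show p ∈ Stmt3Aux.Jd (n+1)
    have hinterp := Stmt3Aux.interp p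
    have hsum : (∑ σ : Fin (n+1) → Bool,
          C (eval (fun i => Stmt3Aux.nu (σ i)) p) * Stmt3Aux.Esig σ)
        = C (eval (fun _ => (1:ℝ)) p) * Stmt3Aux.Esig (fun _ => true) := by
      rw [Finset.sum_eq_single (fun _ : Fin (n+1) => true)]
      · have hfun : (fun i : Fin (n+1) => Stmt3Aux.nu true) = fun _ : Fin (n+1) => (1:ℝ) :=
          funext fun i => by simp [Stmt3Aux.nu]
        show C (eval (fun i : Fin (n+1) => Stmt3Aux.nu true) p) * _ = _
        rw [hfun]
      · intro σ _ hσ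
        have hzero : eval (fun i => Stmt3Aux.nu (σ i)) p = 0 := by
          refine h _ (fun i => ?_) ?_
          · cases hh : σ i <;> simp [Stmt3Aux.nu, hh]
          · intro hcontra
            apply hσ
            funext i
            have hci := congrFun hcontra i
            cases hh : σ i
            · rw [hh] at hci
              exact absurd hci (by norm_num [Stmt3Aux.nu])
            · rfl
        rw [hzero, map_zero, zero_mul]
      · intro hmem
        exact absurd (Finset.mem_univ _) hmem
    rw [hsum, Stmt3Aux.Esig_true] at hinterp
    have hin : p - C (eval (fun _ => (1:ℝ)) p) * qpoly 1 ∈ Stmt3Aux.Jd (n+1) :=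
      Stmt3Aux.Ksq_le_Jd hinterp
    have hq1 : qpoly (1 : Matrix (Fin (n+1)) (Fin (n+1)) ℤ) ∈ Stmt3Aux.Jd (n+1) :=
      Ideal.subset_span Stmt3Aux.one_mem_gset
    have hfin := (Stmt3Aux.Jd (n+1)).add_mem hin (Ideal.mul_mem_left _
      (C (eval (fun _ => (1:ℝ)) p)) hq1)
    rwa [sub_add_cancel] at hfin
  · intro hp ε hε hne
    refine Submodule.span_induction ?_ ?_ ?_ ?_ hp
    · rintro q ⟨Θ, h01, hcols, hdet, rfl⟩
      exact Stmt3Aux.gen_vanish Θ h01 hdet ε hε hne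
    · simp
    · intro x y hx hy hx' hy'
      rw [map_add, hx', hy', add_zero]
    · intro a x hx hx'
      rw [smul_eq_mul, map_mul, hx', mul_zero]
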